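/- (Strict descent) Let g : ℝⁿ → ℝ be convex, let h : ℝⁿ → ℝ be convex and differentiable with gradient ∇h, let x ∈ ℝⁿ, γ > 0, and suppose y ∈ ℝⁿ is a global minimizer of the proximal linearized subproblem α ↦ g(α) − ⟨∇h(x), α − x⟩ + (1/(2γ))·‖α − x‖². If y ≠ x, then with f = g − h one has f(y) < f(x). -/

import Mathlib

open scoped RealInnerProductSpace

/-- **Strict descent.** Let `g : ℝⁿ → ℝ` be convex, `h : ℝⁿ → ℝ` convex and differentiable
with gradient `∇h`, `x ∈ ℝⁿ`, `γ > 0`, and suppose `y` is a global minimizer of the proximal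
linearized subproblem `α ↦ g(α) − ⟪∇h(x), α − x⟫ + (1/(2γ))·‖α − x‖²`. If `y ≠ x`, then
with `f = g − h` one has `f(y) < f(x)`. -/
lemma grad_support_ineq (n : ℕ) (h : EuclideanSpace ℝ (Fin n) → ℝ)
    (hh : ConvexOn ℝ Set.univ h) (x y gx : EuclideanSpace ℝ (Fin n))
    (hgrad : HasGradientAt h gx x) :
    h x + ⟪gx, y - x⟫ ≤ h y := by
  set φ : ℝ → ℝ := fun t => h (x + t • (y - x)) with hφ
  have hline : HasDerivAt (fun t : ℝ => x + t • (y - x)) (y - x) 0 := by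
    simpa using ((hasDerivAt_id (0:ℝ)).smul_const (y - x)).const_add x
  have hfd := hgrad.hasFDerivAt
  have hcomp : HasDerivAt φ ⟪gx, y - x⟫ 0 := by
    have hfd' : HasFDerivAt h ((InnerProductSpace.toDual ℝ (EuclideanSpace ℝ (Fin n))) gx) (x + (0:ℝ) • (y - x)) := by simpa using hfd
    have := hfd'.comp_hasDerivAt 0 hline
    simp [InnerProductSpace.toDual] at this
    exact this
  have hslope : ∀ t ∈ Set.Ioc (0:ℝ) 1, (φ t - φ 0) / t ≤ h y - h x := by
    intro t ht
    have hconv := hh.2 (Set.mem_univ x) (Set.mem_univ y)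
      (by linarith [ht.2] : (0:ℝ) ≤ 1 - t) (le_of_lt ht.1) (by ring)
    have : φ t ≤ (1 - t) * h x + t * h y := by
      have : x + t • (y - x) = (1 - t) • x + t • y := by
        module
      simpa [hφ, this] using hconv
    rw [div_le_iff₀ ht.1]
    simp only [hφ, zero_smul, add_zero]
    nlinarith
  have htend : Filter.Tendsto (fun t => (φ t - φ 0) / t) (nhdsWithin 0 (Set.Ioi 0))
      (nhds ⟪gx, y - x⟫) := by
    have := hcomp.tendsto_slope_zero_right
    simpa [slope_def_field, div_eq_inv_mul] using this
  have hle : ⟪gx, y - x⟫ ≤ h y - h x := by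
    refine le_of_tendsto htend ?_
    filter_upwards [Ioc_mem_nhdsGT_of_mem (by norm_num : (0:ℝ) ∈ Set.Ico 0 1)] with t ht
    exact hslope t ht
  linarith

theorem prox_strict_descent (n : ℕ) (g h : EuclideanSpace ℝ (Fin n) → ℝ)
    (hg : ConvexOn ℝ Set.univ g) (hh : ConvexOn ℝ Set.univ h)
    (gradh : EuclideanSpace ℝ (Fin n) → EuclideanSpace ℝ (Fin n))
    (hgrad : ∀ u : EuclideanSpace ℝ (Fin n), HasGradientAt h (gradh u) u)
    (x y : EuclideanSpace ℝ (Fin n)) (γ : ℝ) (hγ : 0 < γ)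
    (hy : ∀ α : EuclideanSpace ℝ (Fin n),
        g y - ⟪gradh x, y - x⟫ + (1 / (2 * γ)) * ‖y - x‖ ^ 2
          ≤ g α - ⟪gradh x, α - x⟫ + (1 / (2 * γ)) * ‖α - x‖ ^ 2)
    (hne : y ≠ x) :
    g y - h y < g x - h x := by
  have h1 := hy x
  simp only [sub_self, inner_zero_right, norm_zero] at h1
  have h2 : g y ≤ g x + ⟪gradh x, y - x⟫ - (1 / (2 * γ)) * ‖y - x‖ ^ 2 := by
    nlinarith [h1]
  have h3 := grad_support_ineq n h hh x y (gradh x) (hgrad x)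
  have h4 : 0 < (1 / (2 * γ)) * ‖y - x‖ ^ 2 := by
    have : 0 < ‖y - x‖ := by
      simpa [sub_eq_zero] using hne
    positivity
  linarith
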